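/- Let X and Y be real Banach spaces. Then 𝒯^s(X ⊕_1 Y) = min{𝒯^s(X), 𝒯^s(Y)}, where X ⊕_1 Y is the ℓ_1-sum of X and Y. -/

import Mathlib

open Metric Set

noncomputable section

variable (X : Type*) [NormedAddCommGroup X] [NormedSpace ℝ X]

/-- A subset `U` of `X` is weakly open if it is open in the weak topology of `X`. -/
def IsWeaklyOpen (U : Set X) : Prop := IsOpen (toWeakSpace ℝ X '' U)

/-- The slice `S(B_X, f, α) = {x ∈ B_X : f x > 1 - α}` of the closed unit ball of `X`. -/
def sliceSet (f : X →L[ℝ] ℝ) (α : ℝ) : Set X :=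
  {y ∈ closedBall (0 : X) 1 | 1 - α < f y}

/-- `S` is a slice of the closed unit ball of `X`, i.e. `S = S(B_X, f, α)` for some norm-one
functional `f` and some `α > 0`. -/
def IsSlice (S : Set X) : Prop :=
  ∃ f : X →L[ℝ] ℝ, ‖f‖ = 1 ∧ ∃ α > (0 : ℝ), S = sliceSet X f α

/-- The Daugavet index of thickness `𝒯ˢ(X)`: the infimum of all `r > 0` such that some slice of
the closed unit ball is contained in a closed ball of radius `r` centered at a point of the unit
sphere. -/
def Ts : ℝ :=
  sInf {r : ℝ | 0 < r ∧ ∃ x : X, ‖x‖ = 1 ∧ ∃ S : Set X, IsSlice X S ∧ S ⊆ closedBall x r}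

/-- `W` is a nonempty relatively weakly open subset of the closed unit ball of `X`. -/
def IsRelWeakOpen (W : Set X) : Prop :=
  W.Nonempty ∧ ∃ U : Set X, IsWeaklyOpen X U ∧ W = closedBall (0 : X) 1 ∩ U

/-- The Daugavet index of thickness `𝒯(X)`: the infimum of all `r > 0` such that some nonempty
relatively weakly open subset of the closed unit ball is contained in a closed ball of radius `r`
centered at a point of the unit sphere. -/
def Tw : ℝ :=
  sInf {r : ℝ | 0 < r ∧ ∃ x : X, ‖x‖ = 1 ∧ ∃ W : Set X, IsRelWeakOpen X W ∧
    W ⊆ closedBall x r}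

/-- The convex combination `∑ i, l i • W i` of the sets `W i` (the set of all sums
`∑ i, l i • w i` with `w i ∈ W i`). -/
def comboSet {n : ℕ} (l : Fin n → ℝ) (W : Fin n → Set X) : Set X :=
  {z : X | ∃ w : Fin n → X, (∀ i, w i ∈ W i) ∧ z = ∑ i, l i • w i}

/-- The Daugavet index of thickness `𝒯ᶜᶜ(X)`: the infimum of all `r > 0` such that some convex
combination of nonempty relatively weakly open subsets of the closed unit ball is contained in a
closed ball of radius `r` centered at a point of the unit sphere. -/
def Tcc : ℝ :=
  sInf {r : ℝ | 0 < r ∧ ∃ x : X, ‖x‖ = 1 ∧ ∃ (n : ℕ) (l : Fin n → ℝ) (W : Fin n → Set X),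
    (∀ i, 0 ≤ l i) ∧ (∑ i, l i) = 1 ∧ (∀ i, IsRelWeakOpen X (W i)) ∧
    comboSet X l W ⊆ closedBall x r}

/-- `X` has the Daugavet property: for every `x` in the unit sphere, every `ε > 0` and every
slice `S` of the closed unit ball there exists `y ∈ S` with `‖x - y‖ ≥ 2 - ε`. -/
def DaugavetProperty : Prop :=
  ∀ x : X, ‖x‖ = 1 → ∀ ε > (0 : ℝ), ∀ S : Set X, IsSlice X S → ∃ y ∈ S, 2 - ε ≤ ‖x - y‖

namespace TsAux

variable {E G : Type*} [NormedAddCommGroup E] [NormedSpace ℝ E]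
  [NormedAddCommGroup G] [NormedSpace ℝ G]

/-- The defining set of `Ts`. -/
def TsSet (E : Type*) [NormedAddCommGroup E] [NormedSpace ℝ E] : Set ℝ :=
  {r : ℝ | 0 < r ∧ ∃ x : E, ‖x‖ = 1 ∧ ∃ S : Set E, IsSlice E S ∧ S ⊆ closedBall x r}

lemma Ts_eq (E : Type*) [NormedAddCommGroup E] [NormedSpace ℝ E] :
    Ts E = sInf (TsSet E) := rfl

lemma bddBelow_TsSet (E : Type*) [NormedAddCommGroup E] [NormedSpace ℝ E] :
    BddBelow (TsSet E) := ⟨0, fun _ hr => hr.1.le⟩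

omit [NormedSpace ℝ E] [NormedSpace ℝ G] in
lemma L1norm (z : WithLp 1 (E × G)) : ‖z‖ = ‖z.fst‖ + ‖z.snd‖ := by
  rw [WithLp.prod_norm_eq_add (by norm_num)]; norm_num

omit [NormedSpace ℝ E] [NormedSpace ℝ G] in
lemma norm_symm_mk (u : E) (v : G) :
    ‖(WithLp.equiv 1 (E × G)).symm (u, v)‖ = ‖u‖ + ‖v‖ :=
  L1norm _

lemma two_mem (E : Type*) [NormedAddCommGroup E] [NormedSpace ℝ E] [Nontrivial E] :
    (2 : ℝ) ∈ TsSet E := by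
  obtain ⟨v, hv⟩ := exists_ne (0 : E)
  obtain ⟨f, hf, -⟩ := exists_dual_vector ℝ v (norm_ne_zero_iff.2 hv)
  have hx : ‖‖v‖⁻¹ • v‖ = 1 := by
    rw [norm_smul, norm_inv, norm_norm, inv_mul_cancel₀ (norm_ne_zero_iff.2 hv)]
  refine ⟨two_pos, ‖v‖⁻¹ • v, hx, sliceSet E f 3, ⟨f, hf, 3, by norm_num, rfl⟩, ?_⟩
  rintro u ⟨hu1, -⟩
  rw [mem_closedBall_zero_iff] at hu1
  rw [mem_closedBall, dist_eq_norm]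
  calc ‖u - ‖v‖⁻¹ • v‖ ≤ ‖u‖ + ‖‖v‖⁻¹ • v‖ := norm_sub_le _ _
    _ ≤ 2 := by rw [hx]; linarith

lemma Ts_le_two (E : Type*) [NormedAddCommGroup E] [NormedSpace ℝ E] [Nontrivial E] :
    Ts E ≤ 2 := by
  rw [Ts_eq]; exact csInf_le (bddBelow_TsSet E) (two_mem E)

section maps

def fstL : WithLp 1 (E × G) →L[ℝ] E :=
  (ContinuousLinearMap.fst ℝ E G).comp
    (WithLp.prodContinuousLinearEquiv 1 ℝ E G).toContinuousLinearMap

def sndL : WithLp 1 (E × G) →L[ℝ] G :=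
  (ContinuousLinearMap.snd ℝ E G).comp
    (WithLp.prodContinuousLinearEquiv 1 ℝ E G).toContinuousLinearMap

def inlL : E →L[ℝ] WithLp 1 (E × G) :=
  ((WithLp.prodContinuousLinearEquiv 1 ℝ E G).symm.toContinuousLinearMap).comp
    (ContinuousLinearMap.inl ℝ E G)

def inrL : G →L[ℝ] WithLp 1 (E × G) :=
  ((WithLp.prodContinuousLinearEquiv 1 ℝ E G).symm.toContinuousLinearMap).comp
    (ContinuousLinearMap.inr ℝ E G)

lemma norm_comp_fstL (f : E →L[ℝ] ℝ) : ‖f.comp (fstL (E := E) (G := G))‖ = ‖f‖ := by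
  refine le_antisymm (ContinuousLinearMap.opNorm_le_bound _ (norm_nonneg f) fun z => ?_)
    (ContinuousLinearMap.opNorm_le_bound _ (norm_nonneg _) fun u => ?_)
  · have h2 : ‖z.fst‖ ≤ ‖z‖ := by rw [L1norm z]; linarith [norm_nonneg z.snd]
    calc ‖(f.comp fstL) z‖ = ‖f z.fst‖ := rfl
      _ ≤ ‖f‖ * ‖z.fst‖ := f.le_opNorm _
      _ ≤ ‖f‖ * ‖z‖ := mul_le_mul_of_nonneg_left h2 (norm_nonneg f)
  · calc ‖f u‖ = ‖(f.comp (fstL (E := E) (G := G))) ((WithLp.equiv 1 (E × G)).symm (u, 0))‖ := rfl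
      _ ≤ ‖f.comp (fstL (E := E) (G := G))‖ * ‖(WithLp.equiv 1 (E × G)).symm (u, 0)‖ :=
          ContinuousLinearMap.le_opNorm _ _
      _ = ‖f.comp (fstL (E := E) (G := G))‖ * ‖u‖ := by rw [norm_symm_mk, norm_zero, add_zero]

lemma norm_comp_sndL (g : G →L[ℝ] ℝ) : ‖g.comp (sndL (E := E) (G := G))‖ = ‖g‖ := by
  refine le_antisymm (ContinuousLinearMap.opNorm_le_bound _ (norm_nonneg g) fun z => ?_)
    (ContinuousLinearMap.opNorm_le_bound _ (norm_nonneg _) fun v => ?_)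
  · have h2 : ‖z.snd‖ ≤ ‖z‖ := by rw [L1norm z]; linarith [norm_nonneg z.fst]
    calc ‖(g.comp sndL) z‖ = ‖g z.snd‖ := rfl
      _ ≤ ‖g‖ * ‖z.snd‖ := g.le_opNorm _
      _ ≤ ‖g‖ * ‖z‖ := mul_le_mul_of_nonneg_left h2 (norm_nonneg g)
  · calc ‖g v‖ = ‖(g.comp (sndL (E := E) (G := G))) ((WithLp.equiv 1 (E × G)).symm (0, v))‖ := rfl
      _ ≤ ‖g.comp (sndL (E := E) (G := G))‖ * ‖(WithLp.equiv 1 (E × G)).symm (0, v)‖ :=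
          ContinuousLinearMap.le_opNorm _ _
      _ = ‖g.comp (sndL (E := E) (G := G))‖ * ‖v‖ := by rw [norm_symm_mk, norm_zero, zero_add]

end maps

lemma Ts_prod_le_left [Nontrivial E] [Nontrivial G] :
    Ts (WithLp 1 (E × G)) ≤ Ts E := by
  rw [Ts_eq E]
  refine le_csInf ⟨2, two_mem E⟩ fun r hr => ?_
  obtain ⟨hr0, x, hx, S, ⟨f, hf, α, hα, hSeq⟩, hsub⟩ := hr
  refine le_of_forall_pos_le_add fun ε hε => ?_
  set β := min ε α with hβdef
  have hβ0 : 0 < β := lt_min hε hα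
  have hβα : β ≤ α := min_le_right _ _
  have hmem : r + β ∈ TsSet (WithLp 1 (E × G)) := by
    refine ⟨by linarith, (WithLp.equiv 1 (E × G)).symm (x, 0), ?_,
      sliceSet (WithLp 1 (E × G)) (f.comp fstL) β,
      ⟨f.comp fstL, by rw [norm_comp_fstL, hf], β, hβ0, rfl⟩, ?_⟩
    · rw [norm_symm_mk, norm_zero, add_zero, hx]
    · rintro w ⟨hw1, hw2⟩
      rw [mem_closedBall_zero_iff] at hw1
      have hFw : 1 - β < f w.fst := hw2
      have hwfst : w.fst ∈ S := by
        rw [hSeq]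
        refine ⟨mem_closedBall_zero_iff.2 ?_, by linarith⟩
        rw [L1norm w] at hw1; linarith [norm_nonneg w.snd]
      have hdx : ‖w.fst - x‖ ≤ r := by
        have := hsub hwfst
        rwa [mem_closedBall, dist_eq_norm] at this
      have hfle : f w.fst ≤ ‖w.fst‖ := by
        have := f.le_opNorm w.fst
        rw [hf, one_mul] at this
        exact (le_abs_self _).trans (by rwa [← Real.norm_eq_abs])
      have hsnd : ‖w.snd‖ ≤ β := by
        rw [L1norm w] at hw1; linarith
      rw [mem_closedBall, dist_eq_norm]
      have hnorm : ‖w - (WithLp.equiv 1 (E × G)).symm (x, 0)‖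
          = ‖w.fst - x‖ + ‖w.snd - (0 : G)‖ := L1norm _
      rw [hnorm, sub_zero]
      linarith
  have := csInf_le (bddBelow_TsSet _) hmem
  rw [Ts_eq]
  calc sInf (TsSet (WithLp 1 (E × G))) ≤ r + β := this
    _ ≤ r + ε := by linarith [min_le_left ε α]

lemma Ts_prod_le_right [Nontrivial E] [Nontrivial G] :
    Ts (WithLp 1 (E × G)) ≤ Ts G := by
  rw [Ts_eq G]
  refine le_csInf ⟨2, two_mem G⟩ fun r hr => ?_
  obtain ⟨hr0, y, hy, S, ⟨g, hg, α, hα, hSeq⟩, hsub⟩ := hr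
  refine le_of_forall_pos_le_add fun ε hε => ?_
  set β := min ε α with hβdef
  have hβ0 : 0 < β := lt_min hε hα
  have hβα : β ≤ α := min_le_right _ _
  have hmem : r + β ∈ TsSet (WithLp 1 (E × G)) := by
    refine ⟨by linarith, (WithLp.equiv 1 (E × G)).symm (0, y), ?_,
      sliceSet (WithLp 1 (E × G)) (g.comp sndL) β,
      ⟨g.comp sndL, by rw [norm_comp_sndL, hg], β, hβ0, rfl⟩, ?_⟩
    · rw [norm_symm_mk, norm_zero, zero_add, hy]
    · rintro w ⟨hw1, hw2⟩
      rw [mem_closedBall_zero_iff] at hw1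
      have hFw : 1 - β < g w.snd := hw2
      have hwsnd : w.snd ∈ S := by
        rw [hSeq]
        refine ⟨mem_closedBall_zero_iff.2 ?_, by linarith⟩
        rw [L1norm w] at hw1; linarith [norm_nonneg w.fst]
      have hdy : ‖w.snd - y‖ ≤ r := by
        have := hsub hwsnd
        rwa [mem_closedBall, dist_eq_norm] at this
      have hgle : g w.snd ≤ ‖w.snd‖ := by
        have := g.le_opNorm w.snd
        rw [hg, one_mul] at this
        exact (le_abs_self _).trans (by rwa [← Real.norm_eq_abs])
      have hfst : ‖w.fst‖ ≤ β := by
        rw [L1norm w] at hw1; linarith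
      rw [mem_closedBall, dist_eq_norm]
      have hnorm : ‖w - (WithLp.equiv 1 (E × G)).symm (0, y)‖
          = ‖w.fst - (0 : E)‖ + ‖w.snd - y‖ := L1norm _
      rw [hnorm, sub_zero]
      linarith
  have := csInf_le (bddBelow_TsSet _) hmem
  rw [Ts_eq]
  calc sInf (TsSet (WithLp 1 (E × G))) ≤ r + β := this
    _ ≤ r + ε := by linarith [min_le_left ε α]

lemma norm_sub_normalize {x : E} (hx0 : x ≠ 0) (hx1 : ‖x‖ ≤ 1) :
    ‖x - ‖x‖⁻¹ • x‖ = 1 - ‖x‖ := by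
  have hpos : 0 < ‖x‖ := norm_pos_iff.2 hx0
  have h1 : (1 : ℝ) ≤ ‖x‖⁻¹ := (one_le_inv₀ hpos).2 hx1
  rw [show x - ‖x‖⁻¹ • x = (1 - ‖x‖⁻¹) • x by rw [sub_smul, one_smul], norm_smul,
    Real.norm_eq_abs, abs_of_nonpos (by linarith), neg_sub, sub_mul,
    inv_mul_cancel₀ hpos.ne', one_mul]

lemma min_le_of_mem [Nontrivial E] [Nontrivial G] {r : ℝ}
    (hr : r ∈ TsSet (WithLp 1 (E × G))) : min (Ts E) (Ts G) ≤ r := by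
  obtain ⟨hr0, z, hz, S, ⟨F, hF, α, hα, hSeq⟩, hsub⟩ := hr
  set f : E →L[ℝ] ℝ := F.comp inlL with hfdef
  set g : G →L[ℝ] ℝ := F.comp inrL with hgdef
  have hfF : ‖f‖ ≤ 1 := by
    refine ContinuousLinearMap.opNorm_le_bound _ zero_le_one fun u => ?_
    calc ‖f u‖ = ‖F ((WithLp.equiv 1 (E × G)).symm (u, 0))‖ := rfl
      _ ≤ ‖F‖ * ‖(WithLp.equiv 1 (E × G)).symm (u, 0)‖ := F.le_opNorm _
      _ = 1 * ‖u‖ := by rw [hF, norm_symm_mk, norm_zero, add_zero]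
  have hgF : ‖g‖ ≤ 1 := by
    refine ContinuousLinearMap.opNorm_le_bound _ zero_le_one fun v => ?_
    calc ‖g v‖ = ‖F ((WithLp.equiv 1 (E × G)).symm (0, v))‖ := rfl
      _ ≤ ‖F‖ * ‖(WithLp.equiv 1 (E × G)).symm (0, v)‖ := F.le_opNorm _
      _ = 1 * ‖v‖ := by rw [hF, norm_symm_mk, norm_zero, zero_add]
  have hdecomp : ∀ w : WithLp 1 (E × G), F w = f w.fst + g w.snd := by
    intro w
    have hw : w = (WithLp.equiv 1 (E × G)).symm (w.fst, 0)
        + (WithLp.equiv 1 (E × G)).symm (0, w.snd) :=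
      (WithLp.equiv 1 (E × G)).injective (Prod.ext (add_zero _).symm (zero_add _).symm)
    rw [show F w = F ((WithLp.equiv 1 (E × G)).symm (w.fst, 0)
        + (WithLp.equiv 1 (E × G)).symm (0, w.snd)) from by rw [← hw]]
    exact map_add F _ _
  have hFmax : ‖F‖ ≤ max ‖f‖ ‖g‖ := by
    refine ContinuousLinearMap.opNorm_le_bound _ (le_max_of_le_left (norm_nonneg f)) fun w => ?_
    have h1 : ‖f w.fst‖ ≤ ‖f‖ * ‖w.fst‖ := f.le_opNorm _
    have h2 : ‖g w.snd‖ ≤ ‖g‖ * ‖w.snd‖ := g.le_opNorm _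
    have hmf : ‖f‖ ≤ max ‖f‖ ‖g‖ := le_max_left _ _
    have hmg : ‖g‖ ≤ max ‖f‖ ‖g‖ := le_max_right _ _
    calc ‖F w‖ = ‖f w.fst + g w.snd‖ := by rw [hdecomp]
      _ ≤ ‖f w.fst‖ + ‖g w.snd‖ := norm_add_le _ _
      _ ≤ ‖f‖ * ‖w.fst‖ + ‖g‖ * ‖w.snd‖ := add_le_add h1 h2
      _ ≤ max ‖f‖ ‖g‖ * ‖w.fst‖ + max ‖f‖ ‖g‖ * ‖w.snd‖ :=
          add_le_add (mul_le_mul_of_nonneg_right hmf (norm_nonneg _))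
            (mul_le_mul_of_nonneg_right hmg (norm_nonneg _))
      _ = max ‖f‖ ‖g‖ * ‖w‖ := by rw [L1norm w]; ring
  have hmax1 : max ‖f‖ ‖g‖ = 1 :=
    le_antisymm (max_le hfF hgF) (hF ▸ hFmax)
  have hxy : ‖z.fst‖ + ‖z.snd‖ = 1 := by rw [← L1norm]; exact hz
  rcases max_choice ‖f‖ ‖g‖ with hc | hc
  · -- ‖f‖ = 1
    have hf1 : ‖f‖ = 1 := hc ▸ hmax1
    have key : ∀ u : E, ‖u‖ ≤ 1 → 1 - α < f u → ‖u - z.fst‖ + ‖z.snd‖ ≤ r := by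
      intro u hu1 hu2
      have hmem : (WithLp.equiv 1 (E × G)).symm (u, 0) ∈ S := by
        rw [hSeq]
        refine ⟨mem_closedBall_zero_iff.2 (by rw [norm_symm_mk, norm_zero, add_zero]; exact hu1),
          hu2⟩
      have := hsub hmem
      rw [mem_closedBall, dist_eq_norm] at this
      have hnorm : ‖(WithLp.equiv 1 (E × G)).symm (u, 0) - z‖
          = ‖u - z.fst‖ + ‖(0 : G) - z.snd‖ := L1norm _
      rw [hnorm, zero_sub, norm_neg] at this
      exact this
    by_cases hx0 : z.fst = 0
    · -- r ≥ 2
      have hy1 : ‖z.snd‖ = 1 := by rw [hx0, norm_zero] at hxy; linarith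
      have h2r : (2 : ℝ) ≤ r := by
        refine le_of_forall_pos_le_add fun ε hε => ?_
        set δ := min ε α with hδdef
        have hδ0 : 0 < δ := lt_min hε hα
        obtain ⟨u, hu1, hu2⟩ := f.exists_lt_apply_of_lt_opNorm (by rw [hf1]; linarith :
          (1 : ℝ) - δ < ‖f‖)
        set u' := if f u ≤ 0 then -u else u with hu'def
        have hu'1 : ‖u'‖ ≤ 1 := by
          rw [hu'def]; split
          · rw [norm_neg]; linarith
          · linarith
        have hfu' : 1 - δ < f u' := by
          rw [Real.norm_eq_abs] at hu2
          rw [hu'def]; split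
          · rw [map_neg]; rw [abs_of_nonpos (by assumption)] at hu2; linarith
          · rw [abs_of_pos (by linarith [not_le.1 (by assumption)] : 0 < f u)] at hu2; linarith
        have hk := key u' hu'1 (by linarith [min_le_right ε α])
        rw [hx0, sub_zero, hy1] at hk
        have hfle : f u' ≤ ‖u'‖ := by
          have := f.le_opNorm u'
          rw [hf1, one_mul] at this
          exact (le_abs_self _).trans (by rwa [← Real.norm_eq_abs])
        have : 1 - δ < ‖u'‖ := lt_of_lt_of_le hfu' hfle
        have hδε : δ ≤ ε := min_le_left _ _
        linarith
      calc min (Ts E) (Ts G) ≤ Ts E := min_le_left _ _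
        _ ≤ 2 := Ts_le_two E
        _ ≤ r := h2r
    · -- Ts E ≤ r
      refine (min_le_left _ _).trans ?_
      rw [Ts_eq]
      refine csInf_le (bddBelow_TsSet E) ⟨hr0, ‖z.fst‖⁻¹ • z.fst, ?_,
        sliceSet E f α, ⟨f, hf1, α, hα, rfl⟩, ?_⟩
      · rw [norm_smul, norm_inv, norm_norm, inv_mul_cancel₀ (norm_ne_zero_iff.2 hx0)]
      · rintro u ⟨hu1, hu2⟩
        rw [mem_closedBall_zero_iff] at hu1
        have hk := key u hu1 hu2
        have hx1 : ‖z.fst‖ ≤ 1 := by linarith [norm_nonneg z.snd]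
        have hnn : ‖z.fst - ‖z.fst‖⁻¹ • z.fst‖ = 1 - ‖z.fst‖ := norm_sub_normalize hx0 hx1
        rw [mem_closedBall, dist_eq_norm]
        calc ‖u - ‖z.fst‖⁻¹ • z.fst‖
            ≤ ‖u - z.fst‖ + ‖z.fst - ‖z.fst‖⁻¹ • z.fst‖ := by
              have := norm_add_le (u - z.fst) (z.fst - ‖z.fst‖⁻¹ • z.fst)
              rwa [sub_add_sub_cancel] at this
          _ ≤ r := by rw [hnn]; linarith
  · -- ‖g‖ = 1
    have hg1 : ‖g‖ = 1 := hc ▸ hmax1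
    have key : ∀ v : G, ‖v‖ ≤ 1 → 1 - α < g v → ‖v - z.snd‖ + ‖z.fst‖ ≤ r := by
      intro v hv1 hv2
      have hmem : (WithLp.equiv 1 (E × G)).symm (0, v) ∈ S := by
        rw [hSeq]
        refine ⟨mem_closedBall_zero_iff.2 (by rw [norm_symm_mk, norm_zero, zero_add]; exact hv1),
          hv2⟩
      have := hsub hmem
      rw [mem_closedBall, dist_eq_norm] at this
      have hnorm : ‖(WithLp.equiv 1 (E × G)).symm (0, v) - z‖
          = ‖(0 : E) - z.fst‖ + ‖v - z.snd‖ := L1norm _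
      rw [hnorm, zero_sub, norm_neg] at this
      linarith
    by_cases hy0 : z.snd = 0
    · have hx1 : ‖z.fst‖ = 1 := by rw [hy0, norm_zero] at hxy; linarith
      have h2r : (2 : ℝ) ≤ r := by
        refine le_of_forall_pos_le_add fun ε hε => ?_
        set δ := min ε α with hδdef
        have hδ0 : 0 < δ := lt_min hε hα
        obtain ⟨v, hv1, hv2⟩ := g.exists_lt_apply_of_lt_opNorm (by rw [hg1]; linarith :
          (1 : ℝ) - δ < ‖g‖)
        set v' := if g v ≤ 0 then -v else v with hv'def
        have hv'1 : ‖v'‖ ≤ 1 := by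
          rw [hv'def]; split
          · rw [norm_neg]; linarith
          · linarith
        have hgv' : 1 - δ < g v' := by
          rw [Real.norm_eq_abs] at hv2
          rw [hv'def]; split
          · rw [map_neg]; rw [abs_of_nonpos (by assumption)] at hv2; linarith
          · rw [abs_of_pos (by linarith [not_le.1 (by assumption)] : 0 < g v)] at hv2; linarith
        have hk := key v' hv'1 (by linarith [min_le_right ε α])
        rw [hy0, sub_zero, hx1] at hk
        have hgle : g v' ≤ ‖v'‖ := by
          have := g.le_opNorm v'
          rw [hg1, one_mul] at this
          exact (le_abs_self _).trans (by rwa [← Real.norm_eq_abs])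
        have : 1 - δ < ‖v'‖ := lt_of_lt_of_le hgv' hgle
        have hδε : δ ≤ ε := min_le_left _ _
        linarith
      calc min (Ts E) (Ts G) ≤ Ts G := min_le_right _ _
        _ ≤ 2 := Ts_le_two G
        _ ≤ r := h2r
    · refine (min_le_right _ _).trans ?_
      rw [Ts_eq]
      refine csInf_le (bddBelow_TsSet G) ⟨hr0, ‖z.snd‖⁻¹ • z.snd, ?_,
        sliceSet G g α, ⟨g, hg1, α, hα, rfl⟩, ?_⟩
      · rw [norm_smul, norm_inv, norm_norm, inv_mul_cancel₀ (norm_ne_zero_iff.2 hy0)]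
      · rintro v ⟨hv1, hv2⟩
        rw [mem_closedBall_zero_iff] at hv1
        have hk := key v hv1 hv2
        have hy1 : ‖z.snd‖ ≤ 1 := by linarith [norm_nonneg z.fst]
        have hnn : ‖z.snd - ‖z.snd‖⁻¹ • z.snd‖ = 1 - ‖z.snd‖ := norm_sub_normalize hy0 hy1
        rw [mem_closedBall, dist_eq_norm]
        calc ‖v - ‖z.snd‖⁻¹ • z.snd‖
            ≤ ‖v - z.snd‖ + ‖z.snd - ‖z.snd‖⁻¹ • z.snd‖ := by
              have := norm_add_le (v - z.snd) (z.snd - ‖z.snd‖⁻¹ • z.snd)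
              rwa [sub_add_sub_cancel] at this
          _ ≤ r := by rw [hnn]; linarith

end TsAux

theorem stmt_12 (X Y : Type*) [NormedAddCommGroup X] [NormedSpace ℝ X]
    [CompleteSpace X] [Nontrivial X] [NormedAddCommGroup Y] [NormedSpace ℝ Y]
    [CompleteSpace Y] [Nontrivial Y] :
    Ts (WithLp 1 (X × Y)) = min (Ts X) (Ts Y) := by
  refine le_antisymm (le_min TsAux.Ts_prod_le_left TsAux.Ts_prod_le_right) ?_
  rw [TsAux.Ts_eq]
  exact le_csInf ⟨2, TsAux.two_mem _⟩ fun r hr => TsAux.min_le_of_mem hr
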